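/- For s ≠ t in (-1,1), ∂/∂t arcsin c(s,t) = -sgn(t-s)·c(s,t)/(1-t²), where c(s,t) = √((1-s²)(1-t²))/(1-st). -/

import Mathlib

/-- ∂/∂t arcsin c(s,t) = -sgn(t-s) c(s,t)/(1-t²) for s ≠ t in (-1,1), where
c(s,t) = √((1-s²)(1-t²))/(1-st). -/
theorem deriv_arcsin_c (s t : ℝ)
    (hs : s ∈ Set.Ioo (-1 : ℝ) 1) (ht : t ∈ Set.Ioo (-1 : ℝ) 1) (hst : s ≠ t) :
    HasDerivAt (fun u : ℝ => Real.arcsin (Real.sqrt ((1 - s ^ 2) * (1 - u ^ 2)) / (1 - s * u)))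
      (-(Real.sign (t - s)) * (Real.sqrt ((1 - s ^ 2) * (1 - t ^ 2)) / (1 - s * t))
        / (1 - t ^ 2)) t := by
  obtain ⟨hs1, hs2⟩ := hs
  obtain ⟨ht1, ht2⟩ := ht
  have ha : (0:ℝ) < 1 - s ^ 2 := by nlinarith
  have hb : (0:ℝ) < 1 - t ^ 2 := by nlinarith
  have hg : (0:ℝ) < 1 - s * t := by nlinarith [sq_nonneg (s - t)]
  have hab : (0:ℝ) < (1 - s ^ 2) * (1 - t ^ 2) := mul_pos ha hb
  set f := Real.sqrt ((1 - s ^ 2) * (1 - t ^ 2)) with hfdef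
  have hf : 0 < f := Real.sqrt_pos.2 hab
  have hf2 : f ^ 2 = (1 - s ^ 2) * (1 - t ^ 2) := Real.sq_sqrt hab.le
  -- derivative of inner polynomial
  have h1 : HasDerivAt (fun u : ℝ => (1 - s ^ 2) * (1 - u ^ 2)) ((1 - s ^ 2) * (0 - 2 * t ^ 1)) t :=
    ((hasDerivAt_const t (1:ℝ)).sub ((hasDerivAt_pow 2 t).congr_deriv (by norm_num))).const_mul _
  have hsqrt : HasDerivAt (fun u : ℝ => Real.sqrt ((1 - s ^ 2) * (1 - u ^ 2)))
      (((1 - s ^ 2) * (0 - 2 * t ^ 1)) / (2 * f)) t := h1.sqrt hab.ne'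
  have hden : HasDerivAt (fun u : ℝ => 1 - s * u) (0 - s * 1) t :=
    (hasDerivAt_const t (1:ℝ)).sub ((hasDerivAt_id t).const_mul s)
  have hdiv : HasDerivAt (fun u : ℝ => Real.sqrt ((1 - s ^ 2) * (1 - u ^ 2)) / (1 - s * u))
      ((((1 - s ^ 2) * (0 - 2 * t ^ 1)) / (2 * f) * (1 - s * t) - f * (0 - s * 1)) /
        (1 - s * t) ^ 2) t := hsqrt.div hden hg.ne'
  -- c = f / g is in (0,1)
  set c := f / (1 - s * t) with hcdef
  have hc0 : 0 < c := div_pos hf hg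
  have hc1 : c < 1 := by
    rw [hcdef, div_lt_one hg, show f = Real.sqrt ((1 - s ^ 2) * (1 - t ^ 2)) from rfl,
      show (1 - s^2)*(1-t^2) = (1-s*t)^2 - (s-t)^2 by ring]
    calc Real.sqrt ((1-s*t)^2 - (s-t)^2) < Real.sqrt ((1-s*t)^2) := by
          apply Real.sqrt_lt_sqrt (by nlinarith [sq_nonneg (s-t), sq_nonneg (s+t)])
          nlinarith [sq_nonneg (s-t), sub_ne_zero.2 hst, sq_pos_of_ne_zero (sub_ne_zero.2 hst)]
      _ = 1 - s*t := Real.sqrt_sq hg.le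
  have harcsin : HasDerivAt Real.arcsin (1 / Real.sqrt (1 - c ^ 2)) c :=
    Real.hasDerivAt_arcsin (by linarith) (ne_of_lt hc1)
  have hcomp := harcsin.comp t hdiv
  have hroot : Real.sqrt (1 - c ^ 2) = |s - t| / (1 - s * t) := by
    have : 1 - c ^ 2 = ((s - t) / (1 - s * t)) ^ 2 := by
      rw [hcdef, div_pow, div_pow, hf2]
      field_simp
      ring
    rw [this, Real.sqrt_sq_eq_abs, abs_div, abs_of_pos hg]
  have hstne : s - t ≠ 0 := sub_ne_zero.2 hst
  refine hcomp.congr_deriv (Eq.symm ?_)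
  rw [Function.comp_def] at *
  rw [hroot]
  rcases lt_or_gt_of_ne hst with h | h
  · have hsgn : Real.sign (t - s) = 1 := Real.sign_of_pos (by linarith)
    have habs : |s - t| = t - s := by rw [abs_of_neg (by linarith)]; ring
    rw [hsgn, habs, hcdef]
    have h2 : t - s ≠ 0 := by intro h0; exact hst (by linarith)
    field_simp
    linear_combination (-2*(1-s*t)^2*(t-s) - 2*(1-t^2)*s*(1-s*t)^2 - 2*s*t^2*(1-s*t)*(2-s*t)) * hf2
  · have hsgn : Real.sign (t - s) = -1 := Real.sign_of_neg (by linarith)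
    have habs : |s - t| = s - t := abs_of_pos (by linarith)
    rw [hsgn, habs, hcdef]
    field_simp
    linear_combination (-2*(1-s*t)^2*(t-s) - 2*(1-t^2)*s*(1-s*t)^2 - 2*s*t^2*(1-s*t)*(2-s*t)) * hf2
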